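/- For every integer n, BP(n)·(BP(n))*_{ij} + BP(n−1)·(BP(n−1))*_{ij} = 6·Q(2n+2)·1. -/

import Mathlib

open scoped TensorProduct

noncomputable def bi : ℂ ⊗[ℝ] ℂ := Complex.I ⊗ₜ[ℝ] 1
noncomputable def bj : ℂ ⊗[ℝ] ℂ := (1 : ℂ) ⊗ₜ[ℝ] Complex.I
noncomputable def bij : ℂ ⊗[ℝ] ℂ := Complex.I ⊗ₜ[ℝ] Complex.I

/-- The bicomplex Pell number `BP n = P n + P (n+1) i + P (n+2) j + P (n+3) ij`. -/
noncomputable def BP (P : ℤ → ℤ) (n : ℤ) : ℂ ⊗[ℝ] ℂ :=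
  (P n : ℝ) • (1 : ℂ ⊗[ℝ] ℂ) + (P (n + 1) : ℝ) • bi + (P (n + 2) : ℝ) • bj +
    (P (n + 3) : ℝ) • bij

/-- The ij-conjugate of the bicomplex Pell number. -/
noncomputable def BPconjIJ (P : ℤ → ℤ) (n : ℤ) : ℂ ⊗[ℝ] ℂ :=
  (P n : ℝ) • (1 : ℂ ⊗[ℝ] ℂ) - (P (n + 1) : ℝ) • bi - (P (n + 2) : ℝ) • bj +
    (P (n + 3) : ℝ) • bij

lemma bi_mul_bi : bi * bi = -1 := by
  simp [bi, Algebra.TensorProduct.tmul_mul_tmul, Complex.I_mul_I,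
    Algebra.TensorProduct.one_def, ← TensorProduct.neg_tmul]

lemma bj_mul_bj : bj * bj = -1 := by
  simp [bj, Algebra.TensorProduct.tmul_mul_tmul, Complex.I_mul_I,
    Algebra.TensorProduct.one_def, ← TensorProduct.tmul_neg]

lemma bij_mul_bij : bij * bij = 1 := by
  simp [bij, Algebra.TensorProduct.tmul_mul_tmul, Complex.I_mul_I,
    Algebra.TensorProduct.one_def, TensorProduct.neg_tmul, TensorProduct.tmul_neg]

lemma bi_mul_bj : bi * bj = bij := by
  simp [bi, bj, bij, Algebra.TensorProduct.tmul_mul_tmul]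

lemma bi_mul_bij : bi * bij = -bj := by
  simp [bi, bj, bij, Algebra.TensorProduct.tmul_mul_tmul, Complex.I_mul_I,
    TensorProduct.neg_tmul]

lemma bj_mul_bij : bj * bij = -bi := by
  simp [bi, bj, bij, Algebra.TensorProduct.tmul_mul_tmul, Complex.I_mul_I,
    TensorProduct.tmul_neg]

lemma expand_mul (a b c d : ℝ) :
    (a • (1:ℂ ⊗[ℝ] ℂ) + b • bi + c • bj + d • bij) *
      (a • (1:ℂ ⊗[ℝ] ℂ) - b • bi - c • bj + d • bij) =
    (a^2+b^2+c^2+d^2) • (1:ℂ ⊗[ℝ] ℂ) + (2*(a*d)-2*(b*c)) • bij := by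
  simp only [mul_add, add_mul, mul_sub, sub_mul, smul_mul_smul_comm, one_mul, mul_one,
    bi_mul_bi, bj_mul_bj, bij_mul_bij, bi_mul_bij, bj_mul_bij, bi_mul_bj,
    mul_comm bj bi, mul_comm bij bi, mul_comm bij bj, smul_neg]
  module

lemma key (P Q : ℤ → ℤ)
    (hP : ∀ n : ℤ, P (n + 2) = 2 * P (n + 1) + P n) (hP0 : P 0 = 0) (hP1 : P 1 = 1)
    (hQ : ∀ n : ℤ, Q (n + 2) = 2 * Q (n + 1) + Q n) (hQ0 : Q 0 = 2) (hQ1 : Q 1 = 2) :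
    ∀ n : ℤ, Q (2*n+2) = P n ^ 2 + 2 * P (n+1) ^ 2 + P (n+2) ^ 2 := by
  have hQ6 : ∀ n : ℤ, Q (2*n+6) = 6 * Q (2*n+4) - Q (2*n+2) := by
    intro n
    have h1 := hQ (2*n+2)
    have h2 := hQ (2*n+3)
    have h3 := hQ (2*n+4)
    rw [show 2*n+2+2 = 2*n+4 from by ring, show 2*n+2+1 = 2*n+3 from by ring] at h1
    rw [show 2*n+3+2 = 2*n+5 from by ring, show 2*n+3+1 = 2*n+4 from by ring] at h2
    rw [show 2*n+4+2 = 2*n+6 from by ring, show 2*n+4+1 = 2*n+5 from by ring] at h3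
    linarith
  have hR6 : ∀ n : ℤ, P (n+2) ^ 2 + 2 * P (n+3) ^ 2 + P (n+4) ^ 2
      = 6 * (P (n+1) ^ 2 + 2 * P (n+2) ^ 2 + P (n+3) ^ 2)
        - (P n ^ 2 + 2 * P (n+1) ^ 2 + P (n+2) ^ 2) := by
    intro n
    have h2 := hP (n+1)
    have h3 := hP (n+2)
    rw [show n+1+2 = n+3 from by ring, show n+1+1 = n+2 from by ring] at h2
    rw [show n+2+2 = n+4 from by ring, show n+2+1 = n+3 from by ring] at h3
    rw [h3, h2, hP n]
    ring
  have main : ∀ n : ℤ, (Q (2*n+2) = P n ^ 2 + 2 * P (n+1) ^ 2 + P (n+2) ^ 2) ∧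
      (Q (2*(n+1)+2) = P (n+1) ^ 2 + 2 * P (n+1+1) ^ 2 + P (n+1+2) ^ 2) := by
    intro n
    induction n using Int.induction_on with
    | zero =>
      have p2 := hP 0; norm_num [hP0, hP1] at p2
      have p3 := hP 1; norm_num [hP1, p2] at p3
      have q2 := hQ 0; norm_num [hQ0, hQ1] at q2
      have q3 := hQ 1; norm_num [hQ1, q2] at q3
      have q4 := hQ 2; norm_num [q2, q3] at q4
      norm_num [hP0, hP1, p2, p3, q2, q4]
    | succ k ih =>
      obtain ⟨h1, h2⟩ := ih
      refine ⟨h2, ?_⟩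
      have hq := hQ6 k
      have hr := hR6 k
      have h2' : Q (2*(k:ℤ)+4) = P ((k:ℤ)+1) ^ 2 + 2 * P ((k:ℤ)+2) ^ 2 + P ((k:ℤ)+3) ^ 2 := by
        rw [show 2*(k:ℤ)+4 = 2*((k:ℤ)+1)+2 from by ring]
        rw [show (k:ℤ)+2 = (k:ℤ)+1+1 from by ring, show (k:ℤ)+3 = (k:ℤ)+1+2 from by ring]
        exact h2
      rw [show 2*((k:ℤ)+1+1)+2 = 2*(k:ℤ)+6 from by ring,
        show (k:ℤ)+1+1+2 = (k:ℤ)+4 from by ring,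
        show (k:ℤ)+1+1+1 = (k:ℤ)+3 from by ring,
        show (k:ℤ)+1+1 = (k:ℤ)+2 from by ring]
      linarith
    | pred k ih =>
      obtain ⟨h1, h2⟩ := ih
      have h2' : Q (2*(-(k:ℤ)+1)+2) = P (-(k:ℤ)+1) ^ 2 + 2 * P (-(k:ℤ)+2) ^ 2 + P (-(k:ℤ)+3) ^ 2 := by
        rw [show -(k:ℤ)+2 = -(k:ℤ)+1+1 from by ring, show -(k:ℤ)+3 = -(k:ℤ)+1+2 from by ring]
        exact h2
      constructor
      · have hq := hQ6 (-(k:ℤ)-1)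
        have hr := hR6 (-(k:ℤ)-1)
        rw [show 2*(-(k:ℤ)-1)+6 = 2*(-(k:ℤ)+1)+2 from by ring,
          show 2*(-(k:ℤ)-1)+4 = 2*(-(k:ℤ))+2 from by ring] at hq
        rw [show -(k:ℤ)-1+1 = -(k:ℤ) from by ring,
          show -(k:ℤ)-1+2 = -(k:ℤ)+1 from by ring,
          show -(k:ℤ)-1+3 = -(k:ℤ)+2 from by ring,
          show -(k:ℤ)-1+4 = -(k:ℤ)+3 from by ring] at hr
        rw [show -(k:ℤ)-1+1 = -(k:ℤ) from by ring,
          show -(k:ℤ)-1+2 = -(k:ℤ)+1 from by ring]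
        linarith
      · rw [show 2*(-(k:ℤ)-1+1)+2 = 2*(-(k:ℤ))+2 from by ring,
          show -(k:ℤ)-1+1+2 = -(k:ℤ)+2 from by ring,
          show -(k:ℤ)-1+1+1 = -(k:ℤ)+1 from by ring,
          show -(k:ℤ)-1+1 = -(k:ℤ) from by ring]
        exact h1
  exact fun n => (main n).1

theorem bicomplexPell_mul_conjIJ_add (P Q : ℤ → ℤ)
    (hP : ∀ n : ℤ, P (n + 2) = 2 * P (n + 1) + P n) (hP0 : P 0 = 0) (hP1 : P 1 = 1)
    (hQ : ∀ n : ℤ, Q (n + 2) = 2 * Q (n + 1) + Q n) (hQ0 : Q 0 = 2) (hQ1 : Q 1 = 2)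
    (n : ℤ) :
    BP P n * BPconjIJ P n + BP P (n - 1) * BPconjIJ P (n - 1) =
      (6 * (Q (2 * n + 2) : ℝ)) • (1 : ℂ ⊗[ℝ] ℂ) := by
  rw [BP, BPconjIJ, BP, BPconjIJ, expand_mul, expand_mul]
  rw [show n-1+1 = n from by ring, show n-1+2 = n+1 from by ring,
    show n-1+3 = n+2 from by ring]
  -- substitution facts over ℤ
  have hm : P (n-1) = P (n+1) - 2 * P n := by
    have h := hP (n-1)
    rw [show n-1+2 = n+1 from by ring, show n-1+1 = n from by ring] at h
    linarith
  have h2 := hP n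
  have h3 := hP (n+1)
  rw [show n+1+2 = n+3 from by ring, show n+1+1 = n+2 from by ring] at h3
  have hk := key P Q hP hP0 hP1 hQ hQ0 hQ1 n
  have hS : ((P n : ℝ)^2 + (P (n+1) : ℝ)^2 + (P (n+2) : ℝ)^2 + (P (n+3) : ℝ)^2)
      + ((P (n-1) : ℝ)^2 + (P n : ℝ)^2 + (P (n+1) : ℝ)^2 + (P (n+2) : ℝ)^2)
      = 6 * (Q (2*n+2) : ℝ) := by
    have : (P n ^2 + P (n+1)^2 + P (n+2)^2 + P (n+3)^2)
        + (P (n-1)^2 + P n^2 + P (n+1)^2 + P (n+2)^2) = 6 * Q (2*n+2) := by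
      rw [hk, hm, h3, h2]; ring
    exact_mod_cast this
  have hT : (2*((P n : ℝ) * (P (n+3) : ℝ)) - 2*((P (n+1) : ℝ) * (P (n+2) : ℝ)))
      + (2*((P (n-1) : ℝ) * (P (n+2) : ℝ)) - 2*((P n : ℝ) * (P (n+1) : ℝ))) = 0 := by
    have : (2*(P n * P (n+3)) - 2*(P (n+1) * P (n+2)))
        + (2*(P (n-1) * P (n+2)) - 2*(P n * P (n+1))) = 0 := by
      rw [hm, h3, h2]; ring
    exact_mod_cast this
  rw [add_add_add_comm, ← add_smul, ← add_smul, hS, hT, zero_smul, add_zero]
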